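/- Let μ be a probability distribution on a finite set T, let x be a point, and sort the elements of T by increasing distance from x into groups A_1, ..., A_k of equal distance with masses μ_i = μ(A_i), and partial sums Q_i = μ_0 + μ_1 + ... + μ_i where μ_0 = μ({x}). Then Z_x := ∑_{i=1}^{k} μ_i/Q_i ≤ 1 + ln(1/Q_1), where Q_1 = μ_0 + μ_1. In particular Z_x ≤ 1 + ln(1/μ(x*)) where x* is a closest element of T to x with μ(x*) > 0. -/
import Mathlib

lemma stmt_1_aux (μ : ℕ → ℝ) (hμ : ∀ i, 0 ≤ μ i)
    (Q : ℕ → ℝ) (hQ : ∀ i, Q i = ∑ j ∈ Finset.range (i + 1), μ j)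
    (hQ1 : 0 < Q 1) :
    ∀ k, 1 ≤ k → ∑ i ∈ Finset.Icc 1 k, μ i / Q i ≤ 1 + Real.log (Q k) - Real.log (Q 1) := by
  have Qmono : ∀ i j : ℕ, i ≤ j → Q i ≤ Q j := by
    intro i j hij
    rw [hQ, hQ]
    exact Finset.sum_le_sum_of_subset_of_nonneg
      (Finset.range_subset_range.2 (by omega)) (fun t _ _ => hμ t)
  have Qpos : ∀ i, 1 ≤ i → 0 < Q i := fun i hi => lt_of_lt_of_le hQ1 (Qmono 1 i hi)
  intro k
  induction k with
  | zero => omega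
  | succ n ih =>
    intro _
    rcases Nat.eq_or_lt_of_le (Nat.one_le_iff_ne_zero.2 (Nat.succ_ne_zero n)) with h1 | h1
    · have hn0 : n = 0 := by omega
      subst hn0
      norm_num
      have hμ1 : μ 1 ≤ Q 1 := by
        rw [hQ 1, Finset.sum_range_succ, Finset.sum_range_one]
        linarith [hμ 0]
      rw [div_le_one hQ1]
      exact hμ1
    · have hn : 1 ≤ n := by omega
      rw [Finset.sum_Icc_succ_top (by omega : 1 ≤ n + 1)]
      have hQn : 0 < Q n := Qpos n hn
      have hQn1 : 0 < Q (n + 1) := Qpos (n + 1) (by omega)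
      have hstep : Q (n + 1) = Q n + μ (n + 1) := by
        rw [hQ, hQ, Finset.sum_range_succ]
      have hlog : μ (n + 1) / Q (n + 1) ≤ Real.log (Q (n + 1)) - Real.log (Q n) := by
        have h1 : Real.log (Q n / Q (n + 1)) ≤ Q n / Q (n + 1) - 1 :=
          Real.log_le_sub_one_of_pos (div_pos hQn hQn1)
        rw [Real.log_div (ne_of_gt hQn) (ne_of_gt hQn1)] at h1
        have h2 : μ (n + 1) / Q (n + 1) = 1 - Q n / Q (n + 1) := by
          field_simp
          linarith [hstep]
        linarith
      linarith [ih hn]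

/-- With masses `μ 0, μ 1, ..., μ k ≥ 0`, partial sums `Q i = μ 0 + ⋯ + μ i`,
`Q 1 > 0` and total mass `Q k = 1`, the normalization constant
`Z = ∑_{i=1}^k μ i / Q i` satisfies `Z ≤ 1 + ln (1 / Q 1)`. -/
theorem stmt_1 (k : ℕ) (hk : 1 ≤ k) (μ : ℕ → ℝ) (hμ : ∀ i, 0 ≤ μ i)
    (Q : ℕ → ℝ) (hQ : ∀ i, Q i = ∑ j ∈ Finset.range (i + 1), μ j)
    (hQ1 : 0 < Q 1) (hQk : Q k = 1) :
    ∑ i ∈ Finset.Icc 1 k, μ i / Q i ≤ 1 + Real.log (1 / Q 1) := by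
  have h := stmt_1_aux μ hμ Q hQ hQ1 k hk
  rw [hQk, Real.log_one] at h
  rw [one_div, Real.log_inv]
  linarith
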